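/- For b ∈ (2/3,1], let G(b) = ∫_{[2/3,1]} min((x−2/3)², (x−b)²) dP(x) be the distortion error on [2/3,1] due to the two points 2/3 and b. Then G attains its minimum over b ∈ (2/3,1] uniquely at b = 17/18, and the minimum value is G(17/18) = 1/648. -/

import Mathlib

open MeasureTheory Set
open scoped ENNReal

noncomputable section

/-- The similarity map `S_j(x) = x/3^j + 1 - 1/3^(j-1)`. -/
def Smap (j : ℕ) (x : ℝ) : ℝ := x / 3 ^ j + 1 - 1 / 3 ^ (j - 1)

/-- The similarity ratio `s_j = 3^(-j)`. -/
def srat (j : ℕ) : ℝ := (3 : ℝ)⁻¹ ^ j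

/-- The probability `p_j = 2^(-j)`. -/
def prob (j : ℕ) : ℝ := (2 : ℝ)⁻¹ ^ j

/-- `J_j = S_j([0,1])`. -/
def Jset (j : ℕ) : Set ℝ := Smap j '' Set.Icc 0 1

/-- For a word `ω = ω₁⋯ω_n`, `S_ω = S_{ω₁} ∘ ⋯ ∘ S_{ω_n}`. -/
def Sword : List ℕ → ℝ → ℝ
  | [] => id
  | j :: ω => Smap j ∘ Sword ω

/-- `s_ω = s_{ω₁} ⋯ s_{ω_n}`. -/
def sword (ω : List ℕ) : ℝ := (ω.map srat).prod

/-- `p_ω = p_{ω₁} ⋯ p_{ω_n}`. -/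
def pword (ω : List ℕ) : ℝ := (ω.map prob).prod

/-- `J_ω = S_ω([0,1])`. -/
def Jword (ω : List ℕ) : Set ℝ := Sword ω '' Set.Icc 0 1

/-- `ω⁻(ω_{|ω|} + j)` : the word obtained from `ω` by increasing its last letter by `j`. -/
def wordInc (ω : List ℕ) (j : ℕ) : List ℕ := ω.dropLast ++ [ω.getLastD 1 + j]

/-- `a(ω) = S_ω(1/2)`. -/
def aw (ω : List ℕ) : ℝ := Sword ω (1 / 2)

/-- `a(ω, ∞) = S_{ω⁻(ω_{|ω|}+1)}(1/2) + s_{ω⁻(ω_{|ω|}+1)}`. -/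
def awInf (ω : List ℕ) : ℝ := Sword (wordInc ω 1) (1 / 2) + sword (wordInc ω 1)

/-- `J_{(ω,∞)} = ⋃_{j ≥ 1} J_{ω⁻(ω_{|ω|}+j)}`. -/
def JwordInf (ω : List ℕ) : Set ℝ := ⋃ j : ℕ, Jword (wordInc ω (j + 1))

/-- A (nonempty) word over the alphabet `ℕ = {1, 2, 3, …}`. -/
def IsWord (ω : List ℕ) : Prop := ω ≠ [] ∧ ∀ i ∈ ω, 1 ≤ i

/-- The self-similarity equation `P = ∑_{j=1}^∞ 2^{-j} · P ∘ S_j^{-1}`. -/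
def SelfSim (P : Measure ℝ) : Prop :=
  P = Measure.sum fun j : ℕ => ((2 : ℝ≥0∞) ^ (j + 1))⁻¹ • P.map (Smap (j + 1))

/-- The distortion error `∫ min_{a ∈ A} (x - a)² dP(x)` of a set `A` of points. -/
def err (P : Measure ℝ) (A : Set ℝ) : ℝ :=
  ∫ x, sInf ((fun a => (x - a) ^ 2) '' A) ∂P

/-- The `n`-th quantization error. -/
def quantErr (P : Measure ℝ) (n : ℕ) : ℝ :=
  sInf {v | ∃ A : Set ℝ, A.Finite ∧ A.Nonempty ∧ A.ncard ≤ n ∧ v = err P A}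

/-- An optimal set of `n`-means. -/
def IsOptimal (P : Measure ℝ) (n : ℕ) (A : Set ℝ) : Prop :=
  A.Finite ∧ A.Nonempty ∧ A.ncard ≤ n ∧ err P A = quantErr P n

/-- The Voronoi region of `a` with respect to `A`. -/
def voronoi (A : Set ℝ) (a : ℝ) : Set ℝ := {x | ∀ b ∈ A, |x - a| ≤ |x - b|}

/-- `α(ℓ) = {a(ω) : p_ω = 2^{-ℓ}} ∪ {a(ω,∞) : p_ω = 2^{-ℓ}}`. -/
def alphaSet (l : ℕ) : Set ℝ :=
  {x | ∃ ω : List ℕ, IsWord ω ∧ pword ω = (2 : ℝ)⁻¹ ^ l ∧ (x = aw ω ∨ x = awInf ω)}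

/-- The set `α_n(I)` built from `α(ℓ)` and `I ⊆ α(ℓ)`. -/
def alphaNI (l : ℕ) (I : Set ℝ) : Set ℝ :=
  (alphaSet l \ I)
    ∪ {x | ∃ ω : List ℕ, IsWord ω ∧ pword ω = (2 : ℝ)⁻¹ ^ l ∧ aw ω ∈ I ∧
        (x = aw (ω ++ [1]) ∨ x = awInf (ω ++ [1]))}
    ∪ {x | ∃ ω : List ℕ, IsWord ω ∧ pword ω = (2 : ℝ)⁻¹ ^ l ∧ awInf ω ∈ I ∧
        (x = aw (wordInc ω 1) ∨ x = awInf (wordInc ω 1))}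

lemma smap_succ (j : ℕ) (x : ℝ) :
    Smap (j + 1) x = x * (3 : ℝ)⁻¹ ^ (j + 1) + (1 - 3 * (3 : ℝ)⁻¹ ^ (j + 1)) := by
  simp only [Smap, Nat.add_sub_cancel]
  rw [div_eq_mul_inv, ← inv_pow]
  have : (3:ℝ)⁻¹ ^ (j+1) = 3⁻¹ * 3⁻¹ ^ j := by ring
  rw [this]
  have h3 : ((3:ℝ) ^ j)⁻¹ = 3⁻¹ ^ j := by rw [← inv_pow]
  rw [one_div, h3]; ring

lemma smap_meas (k : ℕ) : Measurable (Smap k) := by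
  unfold Smap; fun_prop

lemma hae_mem {P : Measure ℝ} [IsProbabilityMeasure P] (hsupp : P (Set.Icc 0 1) = 1) :
    ∀ᵐ x ∂P, x ∈ Icc (0:ℝ) 1 := by
  have h : P (Icc (0:ℝ) 1)ᶜ = 0 := by
    rw [measure_compl measurableSet_Icc (measure_ne_top P _), hsupp, measure_univ]
    simp
  rw [ae_iff]
  exact h

lemma integ_of_bdd {P : Measure ℝ} [IsProbabilityMeasure P] (hsupp : P (Set.Icc 0 1) = 1)
    {f : ℝ → ℝ} (hf : Measurable f) {C : ℝ} (hC : ∀ x ∈ Icc (0:ℝ) 1, |f x| ≤ C) :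
    Integrable f P := by
  refine (integrable_const C).mono' hf.aestronglyMeasurable ?_
  filter_upwards [hae_mem hsupp] with x hx
  simpa using hC x hx

lemma key_int {P : Measure ℝ} [IsProbabilityMeasure P] (hsupp : P (Set.Icc 0 1) = 1)
    (hself : SelfSim P) {f : ℝ → ℝ} (hf : Measurable f) {C : ℝ}
    (hC : ∀ x ∈ Icc (0:ℝ) 1, |f x| ≤ C) :
    ∫ x, f x ∂P = ∑' j : ℕ, (2:ℝ)⁻¹ ^ (j+1) * ∫ x, f (Smap (j+1) x) ∂P := by
  have hi : Integrable f P := integ_of_bdd hsupp hf hC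
  nth_rewrite 1 [hself]
  rw [integral_sum_measure (hself ▸ hi)]
  refine tsum_congr fun j => ?_
  rw [integral_smul_measure, integral_map (smap_meas (j+1)).aemeasurable hf.aestronglyMeasurable,
    smul_eq_mul]
  congr 1
  simp [ENNReal.toReal_inv, ENNReal.toReal_pow]

section Moments
variable {P : Measure ℝ} [IsProbabilityMeasure P]

lemma int_x (hsupp : P (Set.Icc 0 1) = 1) : Integrable (fun x : ℝ => x) P :=
  integ_of_bdd hsupp measurable_id (C := 1) (fun x hx => by
    rw [abs_le]; exact ⟨by linarith [hx.1], hx.2⟩)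

lemma int_x2 (hsupp : P (Set.Icc 0 1) = 1) : Integrable (fun x : ℝ => x ^ 2) P :=
  integ_of_bdd hsupp (measurable_id.pow_const 2) (C := 1) (fun x hx => by
    rw [abs_le]; constructor <;> nlinarith [hx.1, hx.2])

lemma int_affine (hsupp : P (Set.Icc 0 1) = 1) (a c : ℝ) :
    ∫ x, (x * a + c) ∂P = (∫ x, x ∂P) * a + c := by
  rw [integral_add ((int_x hsupp).mul_const a) (integrable_const c),
    integral_mul_const, integral_const]
  simp

lemma int_affine_sq (hsupp : P (Set.Icc 0 1) = 1) (a c : ℝ) :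
    ∫ x, (x * a + c) ^ 2 ∂P
      = (∫ x, x ^ 2 ∂P) * a ^ 2 + (∫ x, x ∂P) * (2 * a * c) + c ^ 2 := by
  have h : (fun x : ℝ => (x * a + c) ^ 2)
      = fun x : ℝ => x ^ 2 * a ^ 2 + (x * (2 * a * c) + c ^ 2) := by
    funext x; ring
  have hg : Integrable (fun x : ℝ => x * (2 * a * c) + c ^ 2) P :=
    ((int_x hsupp).mul_const _).add (integrable_const _)
  rw [h, integral_add ((int_x2 hsupp).mul_const (a ^ 2)) hg,
    integral_add ((int_x hsupp).mul_const _) (integrable_const _),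
    integral_mul_const, integral_mul_const, integral_const]
  simp; ring

lemma pow6 (j : ℕ) : (6:ℝ)⁻¹ ^ j = 2⁻¹ ^ j * 3⁻¹ ^ j := by
  rw [← mul_pow]; norm_num

lemma pow18 (j : ℕ) : (18:ℝ)⁻¹ ^ j = 2⁻¹ ^ j * (3⁻¹ ^ j * 3⁻¹ ^ j) := by
  rw [← mul_pow, ← mul_pow]; norm_num

lemma sumgeo {r : ℝ} (h0 : 0 ≤ r) (h1 : r < 1) (c : ℝ) :
    ∑' j : ℕ, c * r ^ j = c * (1 - r)⁻¹ := by
  rw [tsum_mul_left, tsum_geometric_of_lt_one h0 h1]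

lemma mean_eq (hsupp : P (Set.Icc 0 1) = 1) (hself : SelfSim P) :
    ∫ x, x ∂P = 1 / 2 := by
  set M := ∫ x, x ∂P with hM
  have key := key_int hsupp hself measurable_id' (C := 1) (fun x hx => by
    rw [abs_le]; exact ⟨by linarith [hx.1], hx.2⟩)
  have hterm : ∀ j : ℕ, (2:ℝ)⁻¹ ^ (j+1) * ∫ x, Smap (j+1) x ∂P
      = (M - 3) / 6 * 6⁻¹ ^ j + 1 / 2 * 2⁻¹ ^ j := by
    intro j
    have : ∫ x, Smap (j+1) x ∂P = M * 3⁻¹ ^ (j+1) + (1 - 3 * 3⁻¹ ^ (j+1)) := by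
      rw [show (fun x => Smap (j+1) x) = fun x => x * 3⁻¹ ^ (j+1) + (1 - 3 * 3⁻¹ ^ (j+1)) from
        funext fun x => smap_succ j x]
      exact int_affine hsupp _ _
    rw [this, pow_succ, pow_succ, pow6]; ring
  have key2 : M = ∑' j : ℕ, ((M - 3) / 6 * 6⁻¹ ^ j + 1 / 2 * 2⁻¹ ^ j) :=
    key.trans (tsum_congr hterm)
  rw [Summable.tsum_add ((summable_geometric_of_lt_one (by norm_num) (by norm_num)).mul_left _)
      ((summable_geometric_of_lt_one (by norm_num) (by norm_num)).mul_left _),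
    sumgeo (by norm_num) (by norm_num), sumgeo (by norm_num) (by norm_num)] at key2
  norm_num at key2
  linarith


lemma var_eq (hsupp : P (Set.Icc 0 1) = 1) (hself : SelfSim P) :
    ∫ x, x ^ 2 ∂P = 3 / 8 := by
  have hM := mean_eq hsupp hself
  set V := ∫ x, x ^ 2 ∂P with hV
  have key := key_int hsupp hself (measurable_id'.pow_const 2) (C := 1) (fun x hx => by
    rw [abs_le]; constructor <;> nlinarith [hx.1, hx.2])
  have hterm : ∀ j : ℕ, (2:ℝ)⁻¹ ^ (j+1) * ∫ x, (Smap (j+1) x) ^ 2 ∂P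
      = (V + 6) / 18 * 18⁻¹ ^ j + (-5 / 6) * 6⁻¹ ^ j + 1 / 2 * 2⁻¹ ^ j := by
    intro j
    have h1 : ∫ x, (Smap (j+1) x) ^ 2 ∂P
        = V * (3⁻¹ ^ (j+1)) ^ 2 + (∫ x, x ∂P) * (2 * 3⁻¹ ^ (j+1) * (1 - 3 * 3⁻¹ ^ (j+1)))
          + (1 - 3 * 3⁻¹ ^ (j+1)) ^ 2 := by
      rw [show (fun x => (Smap (j+1) x) ^ 2)
          = fun x => (x * 3⁻¹ ^ (j+1) + (1 - 3 * 3⁻¹ ^ (j+1))) ^ 2 from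
        funext fun x => by rw [smap_succ]]
      exact int_affine_sq hsupp _ _
    rw [h1, hM, pow_succ, pow_succ, pow_succ, pow6, pow18]; ring
  have key2 : V = ∑' j : ℕ,
      ((V + 6) / 18 * 18⁻¹ ^ j + (-5 / 6) * 6⁻¹ ^ j + 1 / 2 * 2⁻¹ ^ j) :=
    key.trans (tsum_congr hterm)
  have s18 : Summable (fun j : ℕ => (V + 6) / 18 * (18:ℝ)⁻¹ ^ j) :=
    (summable_geometric_of_lt_one (by norm_num) (by norm_num)).mul_left _
  have s6 : Summable (fun j : ℕ => (-5 / 6 : ℝ) * 6⁻¹ ^ j) :=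
    (summable_geometric_of_lt_one (by norm_num) (by norm_num)).mul_left _
  have s2 : Summable (fun j : ℕ => (1 / 2 : ℝ) * 2⁻¹ ^ j) :=
    (summable_geometric_of_lt_one (by norm_num) (by norm_num)).mul_left _
  rw [Summable.tsum_add (s18.add s6) s2, Summable.tsum_add s18 s6,
    sumgeo (by norm_num) (by norm_num), sumgeo (by norm_num) (by norm_num),
    sumgeo (by norm_num) (by norm_num)] at key2
  norm_num at key2
  linarith

end Moments

section Restr
variable {P : Measure ℝ} [IsProbabilityMeasure P]

lemma smap_mem_unit (k : ℕ) {x : ℝ} (hx : x ∈ Icc (0:ℝ) 1) :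
    Smap (k + 1) x ∈ Icc (0:ℝ) 1 := by
  rw [smap_succ]
  have ha1 : (0:ℝ) < 3⁻¹ ^ (k+1) := by positivity
  have ha2 : (3:ℝ)⁻¹ ^ (k+1) ≤ 3⁻¹ ^ 1 :=
    pow_le_pow_of_le_one (by norm_num) (by norm_num) (by omega)
  obtain ⟨h0, h1⟩ := hx
  norm_num at ha2 ⊢
  constructor <;> nlinarith

lemma smap_mem_J2 (k : ℕ) {x : ℝ} (hx : x ∈ Icc (0:ℝ) 1) :
    Smap (k + 2) x ∈ Icc (2/3 : ℝ) 1 := by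
  rw [show k + 2 = (k+1) + 1 from rfl, smap_succ]
  have ha1 : (0:ℝ) < 3⁻¹ ^ (k+1+1) := by positivity
  have ha2 : (3:ℝ)⁻¹ ^ (k+1+1) ≤ 3⁻¹ ^ 2 :=
    pow_le_pow_of_le_one (by norm_num) (by norm_num) (by omega)
  obtain ⟨h0, h1⟩ := hx
  norm_num at ha2 ⊢
  constructor <;> nlinarith

lemma key_int_restr (hsupp : P (Set.Icc 0 1) = 1) (hself : SelfSim P)
    {f : ℝ → ℝ} (hf : Measurable f) {C : ℝ} (hC : ∀ x ∈ Icc (0:ℝ) 1, |f x| ≤ C) :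
    ∫ x in Icc (2/3 : ℝ) 1, f x ∂P
      = ∑' j : ℕ, (2:ℝ)⁻¹ ^ (j+2) * ∫ x, f (Smap (j+2) x) ∂P := by
  have hi : Integrable f P := integ_of_bdd hsupp hf hC
  have hC0 : 0 ≤ C := le_trans (abs_nonneg _) (hC 0 (by norm_num))
  set ρ : ℕ → Measure ℝ :=
    fun j => (((2:ℝ≥0∞) ^ (j+1))⁻¹ • P.map (Smap (j+1))).restrict (Icc (2/3) 1) with hρ
  have hrs : P.restrict (Icc (2/3) 1) = Measure.sum ρ := by
    nth_rewrite 1 [hself]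
    exact Measure.restrict_sum _ measurableSet_Icc
  -- value of each piece
  have h0 : ρ 0 = 0 := by
    rw [hρ]
    simp only [Measure.restrict_smul]
    have : (P.map (Smap 1)).restrict (Icc (2/3) 1) = 0 := by
      rw [Measure.restrict_eq_zero, Measure.map_apply (smap_meas 1) measurableSet_Icc]
      refine measure_mono_null ?_ (by
        rw [measure_compl measurableSet_Icc (measure_ne_top P _), hsupp, measure_univ]; simp)
      intro x hx
      simp only [Set.mem_preimage, Smap, Set.mem_Icc] at hx
      norm_num at hx
      simp only [Set.mem_compl_iff, Set.mem_Icc, not_and_or, not_le]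
      right; linarith [hx.1]
    rw [this, smul_zero]
  have hjr : ∀ j : ℕ, ρ (j+1) = ((2:ℝ≥0∞) ^ (j+2))⁻¹ • P.map (Smap (j+2)) := by
    intro j
    rw [hρ]
    simp only [Measure.restrict_smul]
    congr 1
    refine Measure.restrict_eq_self_of_ae_mem ?_
    refine (ae_map_iff (smap_meas (j+2)).aemeasurable measurableSet_Icc).mpr ?_
    filter_upwards [hae_mem hsupp] with x hx
    exact smap_mem_J2 j hx
  -- termwise values
  have hbdd : ∀ k : ℕ, ‖∫ x, f (Smap (k+1) x) ∂P‖ ≤ C := by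
    intro k
    have := norm_integral_le_of_norm_le_const (μ := P) (f := fun x => f (Smap (k+1) x))
      (C := C) (by filter_upwards [hae_mem hsupp] with x hx
                   simpa using hC _ (smap_mem_unit k hx))
    simpa using this
  have hval : ∀ j : ℕ, ∫ x, f x ∂(ρ (j+1)) = (2:ℝ)⁻¹ ^ (j+2) * ∫ x, f (Smap (j+2) x) ∂P := by
    intro j
    rw [hjr j, integral_smul_measure,
      integral_map (smap_meas (j+2)).aemeasurable hf.aestronglyMeasurable, smul_eq_mul]
    congr 1
    simp [ENNReal.toReal_inv, ENNReal.toReal_pow]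
  -- summability
  have hsum1 : Summable (fun j : ℕ => ∫ x, f x ∂(ρ (j+1))) := by
    refine Summable.of_norm_bounded (g := fun j => (C/4) * (2:ℝ)⁻¹ ^ j)
      ((summable_geometric_of_lt_one (by norm_num) (by norm_num)).mul_left _) ?_
    intro j
    rw [hval j, norm_mul, norm_pow]
    have h1 : ‖(2:ℝ)⁻¹‖ = 2⁻¹ := by rw [Real.norm_eq_abs]; norm_num
    rw [h1]
    have h2 := hbdd (j+1)
    have h3 : (0:ℝ) < 2⁻¹ ^ j := by positivity
    calc (2:ℝ)⁻¹ ^ (j+2) * ‖∫ x, f (Smap (j+2) x) ∂P‖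
        ≤ 2⁻¹ ^ (j+2) * C := by
          refine mul_le_mul_of_nonneg_left ?_ (by positivity)
          exact h2
      _ = C/4 * 2⁻¹ ^ j := by ring
  have hsum : Summable (fun j : ℕ => ∫ x, f x ∂(ρ j)) := by
    refine (summable_nat_add_iff 1).mp ?_
    exact hsum1
  -- put together
  rw [hrs, integral_sum_measure (by rw [← hrs]; exact hi.restrict)]
  rw [hsum.tsum_eq_zero_add]
  rw [h0]
  simp only [integral_zero_measure, zero_add]
  exact tsum_congr hval

lemma smap_mem_J3 (k : ℕ) {x : ℝ} (hx : x ∈ Icc (0:ℝ) 1) :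
    Smap (k + 3) x ∈ Icc (8/9 : ℝ) 1 := by
  rw [show k + 3 = (k+2) + 1 from rfl, smap_succ]
  have ha1 : (0:ℝ) < 3⁻¹ ^ (k+2+1) := by positivity
  have ha2 : (3:ℝ)⁻¹ ^ (k+2+1) ≤ 3⁻¹ ^ 3 :=
    pow_le_pow_of_le_one (by norm_num) (by norm_num) (by omega)
  obtain ⟨h0, h1⟩ := hx
  norm_num at ha2 ⊢
  constructor <;> nlinarith

lemma gb_meas (b : ℝ) : Measurable (fun x : ℝ => min ((x - 2/3)^2) ((x - b)^2)) :=
  ((measurable_id.sub_const _).pow_const 2).min ((measurable_id.sub_const _).pow_const 2)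

lemma gb_bdd {b : ℝ} (hb : b ∈ Ioc (2/3 : ℝ) 1) :
    ∀ x ∈ Icc (0:ℝ) 1, |min ((x - 2/3)^2) ((x - b)^2)| ≤ 1 := by
  intro x hx
  obtain ⟨h0, h1⟩ := hx
  rw [abs_le]
  constructor
  · have := le_min (sq_nonneg (x - 2/3)) (sq_nonneg (x - b))
    linarith [this]
  · refine le_trans (min_le_left _ _) (by nlinarith)

lemma G_decomp {P : Measure ℝ} [IsProbabilityMeasure P]
    (hsupp : P (Set.Icc 0 1) = 1) (hself : SelfSim P) {b : ℝ} (hb : b ∈ Ioc (2/3 : ℝ) 1) :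
    ∫ x in Icc (2/3 : ℝ) 1, min ((x - 2/3)^2) ((x - b)^2) ∂P
      = (1/4) * (∫ x, min ((x/9)^2) ((x/9 + 2/3 - b)^2) ∂P)
        + ((1-b)^2/4 - (1-b)/36 + 1/864) := by
  have hm := mean_eq hsupp hself
  have hv := var_eq hsupp hself
  rw [key_int_restr hsupp hself (gb_meas b) (gb_bdd hb)]
  set s : ℕ → ℝ := fun j =>
    (2:ℝ)⁻¹ ^ (j+2) * ∫ x, min ((Smap (j+2) x - 2/3)^2) ((Smap (j+2) x - b)^2) ∂P with hs
  -- head term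
  have hs0 : s 0 = (1/4) * ∫ x, min ((x/9)^2) ((x/9 + 2/3 - b)^2) ∂P := by
    rw [hs]
    simp only []
    congr 1
    · norm_num
    · congr 1
      funext x
      have h2 : Smap 2 x = x/9 + 2/3 := by simp only [Smap]; norm_num; linarith
      rw [h2]
      congr 1 <;> ring
  -- tail terms
  have hsucc : ∀ j : ℕ, s (j+1)
      = (1-b)^2/8 * 2⁻¹ ^ j + (-(5*(1-b))/216) * 6⁻¹ ^ j + 17/15552 * 18⁻¹ ^ j := by
    intro j
    have hptw : ∀ᵐ x ∂P, min ((Smap (j+3) x - 2/3)^2) ((Smap (j+3) x - b)^2)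
        = (x * 3⁻¹ ^ (j+3) + (1 - 3 * 3⁻¹ ^ (j+3) - b))^2 := by
      filter_upwards [hae_mem hsupp] with x hx
      have hS := smap_mem_J3 j hx
      obtain ⟨hS1, hS2⟩ := hS
      rw [min_eq_right (by nlinarith [hb.1, hb.2])]
      rw [show j + 3 = (j+2) + 1 from rfl, smap_succ]
      ring
    have heval : ∫ x, min ((Smap (j+3) x - 2/3)^2) ((Smap (j+3) x - b)^2) ∂P
        = 3/8 * (3⁻¹ ^ (j+3))^2
          + 1/2 * (2 * 3⁻¹ ^ (j+3) * (1 - 3 * 3⁻¹ ^ (j+3) - b))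
          + (1 - 3 * 3⁻¹ ^ (j+3) - b)^2 := by
      rw [integral_congr_ae hptw, int_affine_sq hsupp, hm, hv]
    rw [hs]
    simp only []
    rw [show j + 1 + 2 = j + 3 from rfl, heval]
    have e2 : (2:ℝ)⁻¹ ^ (j+3) = 2⁻¹ ^ j * (2⁻¹)^3 := by ring
    have e3 : (3:ℝ)⁻¹ ^ (j+3) = 3⁻¹ ^ j * (3⁻¹)^3 := by ring
    rw [e2, e3, pow6, pow18]
    ring
  -- summability of tail
  have hsumtail : Summable (fun j : ℕ => s (j+1)) := by
    rw [show (fun j : ℕ => s (j+1)) = fun j : ℕ =>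
        (1-b)^2/8 * 2⁻¹ ^ j + (-(5*(1-b))/216) * 6⁻¹ ^ j + 17/15552 * 18⁻¹ ^ j
      from funext hsucc]
    exact (((summable_geometric_of_lt_one (by norm_num) (by norm_num)).mul_left _).add
      ((summable_geometric_of_lt_one (by norm_num) (by norm_num)).mul_left _)).add
      ((summable_geometric_of_lt_one (by norm_num) (by norm_num)).mul_left _)
  have hsum : Summable s := (summable_nat_add_iff 1).mp hsumtail
  rw [hsum.tsum_eq_zero_add, hs0]
  have htail : ∑' j : ℕ, s (j+1) = (1-b)^2/4 - (1-b)/36 + 1/864 := by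
    rw [tsum_congr hsucc]
    have sa : Summable (fun j : ℕ => (1-b)^2/8 * (2:ℝ)⁻¹ ^ j) :=
      (summable_geometric_of_lt_one (by norm_num) (by norm_num)).mul_left _
    have sb : Summable (fun j : ℕ => (-(5*(1-b))/216) * (6:ℝ)⁻¹ ^ j) :=
      (summable_geometric_of_lt_one (by norm_num) (by norm_num)).mul_left _
    have sc : Summable (fun j : ℕ => (17/15552 : ℝ) * 18⁻¹ ^ j) :=
      (summable_geometric_of_lt_one (by norm_num) (by norm_num)).mul_left _
    rw [Summable.tsum_add (sa.add sb) sc, Summable.tsum_add sa sb,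
      sumgeo (by norm_num) (by norm_num), sumgeo (by norm_num) (by norm_num),
      sumgeo (by norm_num) (by norm_num)]
    norm_num
    ring
  rw [htail]

lemma I2_eq {P : Measure ℝ} [IsProbabilityMeasure P]
    (hsupp : P (Set.Icc 0 1) = 1) (hself : SelfSim P) {b : ℝ}
    (hb1 : 8/9 ≤ b) (hb2 : b ≤ 1) :
    ∫ x, min ((x/9)^2) ((x/9 + 2/3 - b)^2) ∂P = 1/216 := by
  have hv := var_eq hsupp hself
  have hptw : ∀ᵐ x ∂P, min ((x/9)^2) ((x/9 + 2/3 - b)^2) = x^2 * (1/81) := by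
    filter_upwards [hae_mem hsupp] with x hx
    obtain ⟨h0, h1⟩ := hx
    rw [min_eq_left (by nlinarith)]
    ring
  rw [integral_congr_ae hptw, integral_mul_const, hv]
  norm_num

lemma I2_nonneg {P : Measure ℝ} [IsProbabilityMeasure P] (b : ℝ) :
    0 ≤ ∫ x, min ((x/9)^2) ((x/9 + 2/3 - b)^2) ∂P :=
  integral_nonneg fun x => le_min (sq_nonneg _) (sq_nonneg _)

lemma I2_meas (b : ℝ) : Measurable (fun x : ℝ => min ((x/9)^2) ((x/9 + 2/3 - b)^2)) := by
  refine Measurable.min ?_ ?_ <;> fun_prop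

lemma I2_int {P : Measure ℝ} [IsProbabilityMeasure P]
    (hsupp : P (Set.Icc 0 1) = 1) (b : ℝ) :
    Integrable (fun x : ℝ => min ((x/9)^2) ((x/9 + 2/3 - b)^2)) P := by
  refine integ_of_bdd hsupp (I2_meas b) (C := (1 + |2/3 - b|)^2) ?_
  intro x hx
  obtain ⟨h0, h1⟩ := hx
  rw [abs_le]
  constructor
  · have := le_min (sq_nonneg (x/9)) (sq_nonneg (x/9 + 2/3 - b))
    have : (0:ℝ) ≤ (1 + |2/3 - b|)^2 := by positivity
    nlinarith [le_min (sq_nonneg (x/9)) (sq_nonneg (x/9 + 2/3 - b))]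
  · refine le_trans (min_le_left _ _) ?_
    have := abs_nonneg (2/3 - b)
    nlinarith

lemma PE_lower {P : Measure ℝ} [IsProbabilityMeasure P]
    (hsupp : P (Set.Icc 0 1) = 1) (hself : SelfSim P) :
    (3/8 : ℝ) ≤ (P (Icc (2/3 : ℝ) (25/27))).toReal := by
  set E : Set ℝ := Icc (2/3 : ℝ) (25/27) with hE
  have h1 : Icc (0:ℝ) 1 ⊆ Smap 2 ⁻¹' E := by
    intro x hx
    obtain ⟨h0, h1⟩ := hx
    simp only [Set.mem_preimage, Smap, hE, Set.mem_Icc]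
    norm_num
    constructor <;> linarith
  have h2 : Icc (0:ℝ) 1 ⊆ Smap 3 ⁻¹' E := by
    intro x hx
    obtain ⟨h0, h1⟩ := hx
    simp only [Set.mem_preimage, Smap, hE, Set.mem_Icc]
    norm_num
    constructor <;> linarith
  have key : ((2:ℝ≥0∞)^2)⁻¹ + ((2:ℝ≥0∞)^3)⁻¹ ≤ P E := by
    have hPE : P E = ∑' j : ℕ, ((2:ℝ≥0∞) ^ (j+1))⁻¹ * (P.map (Smap (j+1))) E := by
      nth_rewrite 1 [hself]
      rw [Measure.sum_apply _ measurableSet_Icc]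
      simp [Measure.smul_apply, smul_eq_mul]
      rfl
    have hfin := Summable.sum_le_tsum ({1, 2} : Finset ℕ)
      (fun i _ => (zero_le : 0 ≤ ((fun j : ℕ => ((2:ℝ≥0∞) ^ (j+1))⁻¹ * (P.map (Smap (j+1))) E) i)))
      ENNReal.summable
    rw [← hPE] at hfin
    have hpair : ∑ j ∈ ({1, 2} : Finset ℕ),
        ((2:ℝ≥0∞) ^ (j+1))⁻¹ * (P.map (Smap (j+1))) E
        = ((2:ℝ≥0∞)^2)⁻¹ * (P.map (Smap 2)) E + ((2:ℝ≥0∞)^3)⁻¹ * (P.map (Smap 3)) E := by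
      rw [Finset.sum_pair (by norm_num)]
    rw [hpair] at hfin
    refine le_trans ?_ hfin
    have hm2 : (P.map (Smap 2)) E = P (Smap 2 ⁻¹' E) :=
      Measure.map_apply (smap_meas 2) measurableSet_Icc
    have hm3 : (P.map (Smap 3)) E = P (Smap 3 ⁻¹' E) :=
      Measure.map_apply (smap_meas 3) measurableSet_Icc
    have hge2 : 1 ≤ (P.map (Smap 2)) E := by
      rw [hm2, ← hsupp]; exact measure_mono h1
    have hge3 : 1 ≤ (P.map (Smap 3)) E := by
      rw [hm3, ← hsupp]; exact measure_mono h2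
    calc ((2:ℝ≥0∞)^2)⁻¹ + ((2:ℝ≥0∞)^3)⁻¹
        = ((2:ℝ≥0∞)^2)⁻¹ * 1 + ((2:ℝ≥0∞)^3)⁻¹ * 1 := by rw [mul_one, mul_one]
      _ ≤ _ := add_le_add (mul_le_mul_right hge2 _) (mul_le_mul_right hge3 _)
  have := ENNReal.toReal_mono (measure_ne_top P E) key
  refine le_trans (le_of_eq ?_) this
  rw [ENNReal.toReal_add (by simp) (by simp)]
  simp [ENNReal.toReal_inv]
  norm_num

lemma I2_lower {P : Measure ℝ} [IsProbabilityMeasure P]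
    (hsupp : P (Set.Icc 0 1) = 1) (hself : SelfSim P) {b : ℝ}
    (hb1 : 212/243 ≤ b) (hb2 : b ≤ 8/9) :
    (1/486 : ℝ) ≤ ∫ x, min ((x/9)^2) ((x/9 + 2/3 - b)^2) ∂P := by
  set E : Set ℝ := Icc (2/3 : ℝ) (25/27) with hE
  have hint := I2_int hsupp b
  have step1 : ∫ x in E, (4/729 : ℝ) ∂P
      ≤ ∫ x in E, min ((x/9)^2) ((x/9 + 2/3 - b)^2) ∂P := by
    refine setIntegral_mono_on (integrableOn_const (measure_ne_top P E))
      hint.integrableOn measurableSet_Icc ?_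
    intro x hx
    obtain ⟨h0, h1⟩ := hx
    refine le_min (by nlinarith) (by nlinarith)
  have step2 : ∫ x in E, min ((x/9)^2) ((x/9 + 2/3 - b)^2) ∂P
      ≤ ∫ x, min ((x/9)^2) ((x/9 + 2/3 - b)^2) ∂P :=
    setIntegral_le_integral hint
      (Filter.Eventually.of_forall fun x => le_min (sq_nonneg _) (sq_nonneg _))
  have step0 : (1/486 : ℝ) ≤ ∫ x in E, (4/729 : ℝ) ∂P := by
    rw [setIntegral_const, smul_eq_mul, measureReal_def]
    have := PE_lower hsupp hself
    nlinarith
  linarith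

end Restr

theorem two_point_error_on_J1inf (P : Measure ℝ) [IsProbabilityMeasure P]
    (hsupp : P (Set.Icc 0 1) = 1) (hself : SelfSim P) :
    (∫ x in Set.Icc (2 / 3 : ℝ) 1, min ((x - 2 / 3) ^ 2) ((x - 17 / 18) ^ 2) ∂P) = 1 / 648 ∧
    ∀ b ∈ Set.Ioc (2 / 3 : ℝ) 1, b ≠ 17 / 18 →
      1 / 648 < ∫ x in Set.Icc (2 / 3 : ℝ) 1, min ((x - 2 / 3) ^ 2) ((x - b) ^ 2) ∂P := by
  constructor
  · rw [G_decomp hsupp hself (b := 17/18) ⟨by norm_num, by norm_num⟩,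
      I2_eq hsupp hself (by norm_num) (by norm_num)]
    norm_num
  · intro b hb hne
    rw [G_decomp hsupp hself hb]
    rcases le_or_gt (8/9 : ℝ) b with h89 | h89
    · rw [I2_eq hsupp hself h89 hb.2]
      have hne' : b - 17/18 ≠ 0 := sub_ne_zero.mpr hne
      have hpos : 0 < (b - 17/18)^2 := by
        rcases hne'.lt_or_gt with h | h <;> nlinarith
      nlinarith [hpos]
    · rcases le_or_gt b (212/243 : ℝ) with h212 | h212
      · have h0 := I2_nonneg (P := P) b
        nlinarith [sq_nonneg (b - 212/243), h0, hb.1]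
      · have hI := I2_lower hsupp hself h212.le h89.le
        nlinarith [hI, sq_nonneg (b - 8/9)]


end
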